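/- Define φ : ℝ → ℝ by φ(x) := x − x³/3, and for h > 0 set Φ(h) := ∬_{{(x,y) ∈ ℝ² : y < x}} exp( (2/h)·(φ(x) − φ(y)) ) dx dy. Then Φ(h) ~ (π h / 2)·exp( 8/(3h) ) as h → 0⁺, i.e. Φ(h)·(2/(πh))·exp(−8/(3h)) → 1. Consequently, for real λ → +∞, the double integral ∬_{{η < ξ}} exp( (2/3)(η³ − ξ³) + 2λ(ξ − η) ) dη dξ, which equals the squared Hilbert–Schmidt norm of the resolvent (𝔄⁺ − λ)^{-1} of the complex Airy operator D_x² + ix on L²(ℝ), is asymptotically (π/2)·λ^{-1/2}·exp( (8/3)λ^{3/2} ). -/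

import Mathlib

noncomputable section

open MeasureTheory

/-- `φ(x) = x − x³/3`. -/
def φ (x : ℝ) : ℝ := x - x ^ 3 / 3

/-- `Φ(h) = ∬_{y<x} exp((2/h)(φ(x) − φ(y))) dx dy`. -/
def Φ (h : ℝ) : ℝ :=
  ∫ p in {p : ℝ × ℝ | p.2 < p.1}, Real.exp ((2/h) * (φ p.1 - φ p.2))

open Real Set Filter intervalIntegral
open scoped ENNReal Topology

def qq (u : ℝ) : ℝ := (u - 2)^2 * (u + 4) / 6

lemma meas_qqfun (h : ℝ) : Measurable fun u : ℝ => (Real.sqrt u)⁻¹ * Real.exp (-(qq u)/h) := by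
  unfold qq; fun_prop

lemma int_rpow_half : IntegrableOn (fun u : ℝ => u ^ (-(1:ℝ)/2)) (Ioc (0:ℝ) 1) :=
  (intervalIntegrable_iff_integrableOn_Ioc_of_le zero_le_one).1
    (intervalIntegrable_rpow' (by norm_num))

lemma integral_rpow_half : ∫ u in Ioc (0:ℝ) 1, u ^ (-(1:ℝ)/2) = 2 := by
  rw [← integral_of_le zero_le_one, integral_rpow (Or.inl (by norm_num))]
  rw [Real.one_rpow, Real.zero_rpow (by norm_num : (-(1:ℝ)/2 + 1) ≠ 0)]
  norm_num

lemma sqrt_inv_eq_rpow {u : ℝ} (hu : 0 < u) : (Real.sqrt u)⁻¹ = u ^ (-(1:ℝ)/2) := by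
  rw [Real.sqrt_eq_rpow, ← Real.rpow_neg hu.le]
  norm_num

lemma qq_nonneg {u : ℝ} (hu : 0 < u) : 0 ≤ qq u := by
  unfold qq
  have : (0:ℝ) ≤ u + 4 := by linarith
  positivity

lemma intOn1 {h : ℝ} (hh : 0 < h) :
    IntegrableOn (fun u : ℝ => (Real.sqrt u)⁻¹ * Real.exp (-(qq u)/h)) (Ioc (0:ℝ) 1) := by
  refine Integrable.mono int_rpow_half (meas_qqfun h).aestronglyMeasurable.restrict ?_
  rw [ae_restrict_iff' measurableSet_Ioc]
  refine Eventually.of_forall fun u hu => ?_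
  have hu0 : 0 < u := hu.1
  rw [Real.norm_eq_abs, Real.norm_eq_abs, abs_of_nonneg (by positivity),
    abs_of_nonneg (Real.rpow_nonneg hu0.le _)]
  rw [← sqrt_inv_eq_rpow hu0]
  have h1 : Real.exp (-(qq u)/h) ≤ 1 := by
    rw [Real.exp_le_one_iff]
    exact div_nonpos_of_nonpos_of_nonneg (by linarith [qq_nonneg hu0]) hh.le
  calc (Real.sqrt u)⁻¹ * Real.exp (-(qq u)/h) ≤ (Real.sqrt u)⁻¹ * 1 :=
        mul_le_mul_of_nonneg_left h1 (by positivity)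
    _ = (Real.sqrt u)⁻¹ := mul_one _

lemma intOn2 {h : ℝ} (hh : 0 < h) :
    IntegrableOn (fun u : ℝ => (Real.sqrt u)⁻¹ * Real.exp (-(qq u)/h)) (Ioi (1:ℝ)) := by
  have hb : 0 < 5/(6*h) := by positivity
  have hg : Integrable (fun u : ℝ => Real.exp (-(5/(6*h)) * (u + (-2))^2)) :=
    (integrable_exp_neg_mul_sq hb).comp_add_right (-2)
  refine Integrable.mono hg.integrableOn (meas_qqfun h).aestronglyMeasurable.restrict ?_
  rw [ae_restrict_iff' measurableSet_Ioi]
  refine Eventually.of_forall fun u hu => ?_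
  have hu1 : (1:ℝ) < u := hu
  have hs1 : (1:ℝ) ≤ Real.sqrt u := Real.one_le_sqrt.mpr hu1.le
  rw [Real.norm_eq_abs, Real.norm_eq_abs, abs_of_nonneg (by positivity),
    abs_of_nonneg (Real.exp_pos _).le]
  have h2 : Real.exp (-(qq u)/h) ≤ Real.exp (-(5/(6*h)) * (u + (-2))^2) := by
    rw [Real.exp_le_exp]
    have key : (5/6) * (u-2)^2 ≤ qq u := by
      unfold qq
      nlinarith [mul_nonneg (sq_nonneg (u-2)) (by linarith : (0:ℝ) ≤ u - 1)]
    rw [show -(5/(6*h)) * (u + (-2))^2 = -((5/6) * (u-2)^2)/h by ring]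
    gcongr

  calc (Real.sqrt u)⁻¹ * Real.exp (-(qq u)/h)
      ≤ 1 * Real.exp (-(qq u)/h) := by
        apply mul_le_mul_of_nonneg_right ?_ (Real.exp_pos _).le
        exact inv_le_one_of_one_le₀ hs1
    _ = Real.exp (-(qq u)/h) := one_mul _
    _ ≤ _ := h2

lemma exp_split {h : ℝ} (hh : h ≠ 0) (u : ℝ) :
    Real.exp ((2/h) * (u - u^3/12)) = Real.exp (8/(3*h)) * Real.exp (-(qq u)/h) := by
  rw [← Real.exp_add]
  congr 1
  unfold qq
  field_simp
  ring

lemma continuous_phi : Continuous φ := by unfold φ; fun_prop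

lemma measurableSet_S : MeasurableSet {p : ℝ × ℝ | p.2 < p.1} :=
  measurableSet_lt measurable_snd measurable_fst

lemma integrable_gaussian_shift {b : ℝ} (hb : 0 < b) (a : ℝ) :
    Integrable (fun y : ℝ => Real.exp (-b * (y + a)^2)) :=
  (integrable_exp_neg_mul_sq hb).comp_add_right a

lemma integral_gaussian_shift {b : ℝ} (hb : 0 < b) (a : ℝ) :
    ∫ y : ℝ, Real.exp (-b * (y + a)^2) = Real.sqrt (π / b) := by
  rw [integral_add_right_eq_self (fun y : ℝ => Real.exp (-b * y^2)) a]
  exact integral_gaussian b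

lemma lintegral_gaussian_shift {b : ℝ} (hb : 0 < b) (a : ℝ) :
    ∫⁻ y : ℝ, ENNReal.ofReal (Real.exp (-b * (y + a)^2)) = ENNReal.ofReal (Real.sqrt (π / b)) := by
  rw [← ofReal_integral_eq_lintegral_ofReal (integrable_gaussian_shift hb a)
      (Eventually.of_forall fun y => (Real.exp_pos _).le), integral_gaussian_shift hb a]

lemma lemA {h : ℝ} (hh : 0 < h) :
    Φ h = ∫ u in Ioi (0:ℝ),
        Real.sqrt (π*h/2) * (Real.sqrt u)⁻¹ * Real.exp ((2/h) * (u - u^3/12)) := by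
  have hcont : Continuous fun p : ℝ × ℝ => Real.exp ((2/h) * (φ p.1 - φ p.2)) := by
    apply Real.continuous_exp.comp
    exact continuous_const.mul ((continuous_phi.comp continuous_fst).sub
      (continuous_phi.comp continuous_snd))
  -- the target 1D integrand
  set I1 : ℝ → ℝ := fun u =>
      Real.sqrt (π*h/2) * (Real.sqrt u)⁻¹ * Real.exp ((2/h) * (u - u^3/12)) with hI1
  -- F as a function on pairs
  set F : ℝ × ℝ → ℝ≥0∞ := fun p => ENNReal.ofReal (Real.exp ((2/h) * (φ p.1 - φ p.2))) with hF
  have hFmeas : Measurable F := by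
    exact (ENNReal.measurable_ofReal.comp hcont.measurable)
  -- Step 1 : Φ h as a lintegral
  have h1 : Φ h = (∫⁻ p in {p : ℝ × ℝ | p.2 < p.1}, F p).toReal := by
    rw [Φ, integral_eq_lintegral_of_nonneg_ae
      (Eventually.of_forall fun p => (Real.exp_pos _).le) hcont.aestronglyMeasurable.restrict]
  -- Step 2 : compute the lintegral
  have h2 : (∫⁻ p in {p : ℝ × ℝ | p.2 < p.1}, F p) = ∫⁻ u in Ioi (0:ℝ), ENNReal.ofReal (I1 u) := by
    have e0 : (∫⁻ p in {p : ℝ × ℝ | p.2 < p.1}, F p)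
        = ∫⁻ p : ℝ × ℝ, ({p : ℝ × ℝ | p.2 < p.1}).indicator F p :=
      (lintegral_indicator measurableSet_S F).symm
    rw [e0]
    have e1 : ∫⁻ p : ℝ × ℝ, ({p : ℝ × ℝ | p.2 < p.1}).indicator F p
        = ∫⁻ y : ℝ, ∫⁻ x : ℝ, ({p : ℝ × ℝ | p.2 < p.1}).indicator F (x, y) := by
      rw [Measure.volume_eq_prod]
      exact lintegral_prod_symm' _ (hFmeas.indicator measurableSet_S)
    rw [e1]
    -- inner integral : translate by y
    have e2 : ∀ y : ℝ, (∫⁻ x : ℝ, ({p : ℝ × ℝ | p.2 < p.1}).indicator F (x, y))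
        = ∫⁻ u : ℝ, (Ioi (0:ℝ)).indicator (fun u => F (u + y, y)) u := by
      intro y
      have a1 : ∀ x : ℝ, ({p : ℝ × ℝ | p.2 < p.1}).indicator F (x, y)
          = (Ioi y).indicator (fun x => F (x, y)) x := by
        intro x
        by_cases hx : y < x <;>
          simp [Set.indicator_apply, hx, Set.mem_Ioi, Set.mem_setOf_eq]
      simp_rw [a1]
      rw [← lintegral_add_right_eq_self (fun x => (Ioi y).indicator (fun x => F (x, y)) x) y]
      apply lintegral_congr
      intro u
      by_cases hu : (0:ℝ) < u
      · have : y < u + y := by linarith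
        simp [Set.indicator_apply, hu, this]
      · have : ¬ (y < u + y) := by intro hc; apply hu; linarith
        simp [Set.indicator_apply, hu, this]
    simp_rw [e2]
    -- swap the two integrals
    have e3 : (∫⁻ y : ℝ, ∫⁻ u : ℝ, (Ioi (0:ℝ)).indicator (fun u => F (u + y, y)) u)
        = ∫⁻ u : ℝ, ∫⁻ y : ℝ, (Ioi (0:ℝ)).indicator (fun u => F (u + y, y)) u := by
      apply lintegral_lintegral_swap
      have : (Function.uncurry fun (y u : ℝ) => (Ioi (0:ℝ)).indicator (fun u => F (u + y, y)) u)
          = fun q : ℝ × ℝ => ({q : ℝ × ℝ | 0 < q.2}).indicator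
              (fun q : ℝ × ℝ => F (q.2 + q.1, q.1)) q := by
        funext q
        by_cases hq : (0:ℝ) < q.2 <;>
          simp [Function.uncurry, Set.indicator_apply, hq, Set.mem_Ioi, Set.mem_setOf_eq]
      rw [this]
      exact ((hFmeas.comp (by fun_prop)).indicator
        (measurableSet_lt measurable_const measurable_snd)).aemeasurable
    rw [e3]
    -- pull the indicator out of the inner integral
    have e4 : (∫⁻ u : ℝ, ∫⁻ y : ℝ, (Ioi (0:ℝ)).indicator (fun u => F (u + y, y)) u)
        = ∫⁻ u in Ioi (0:ℝ), ∫⁻ y : ℝ, F (u + y, y) := by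
      rw [← lintegral_indicator measurableSet_Ioi]
      apply lintegral_congr
      intro u
      by_cases hu : u ∈ Ioi (0:ℝ) <;> simp [Set.indicator_apply, hu]
    rw [e4]
    -- inner Gaussian integral
    apply setLIntegral_congr_fun measurableSet_Ioi
    intro u hu
    have hu0 : 0 < u := hu
    have key : ∀ y : ℝ, (2/h) * (φ (u + y) - φ y)
        = (2/h) * (u - u^3/12) + (-(2*u/h) * (y + u/2)^2) := by
      intro y
      unfold φ
      field_simp
      ring
    have hb : 0 < 2*u/h := by positivity
    calc (∫⁻ y : ℝ, F (u + y, y))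
        = ∫⁻ y : ℝ, ENNReal.ofReal (Real.exp ((2/h) * (u - u^3/12)))
            * ENNReal.ofReal (Real.exp (-(2*u/h) * (y + u/2)^2)) := by
          apply lintegral_congr
          intro y
          rw [hF]
          simp only []
          rw [key y, Real.exp_add, ENNReal.ofReal_mul (Real.exp_pos _).le]
      _ = ENNReal.ofReal (Real.exp ((2/h) * (u - u^3/12)))
            * ∫⁻ y : ℝ, ENNReal.ofReal (Real.exp (-(2*u/h) * (y + u/2)^2)) := by
          rw [lintegral_const_mul]
          exact ENNReal.measurable_ofReal.comp (by fun_prop)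
      _ = ENNReal.ofReal (Real.exp ((2/h) * (u - u^3/12)))
            * ENNReal.ofReal (Real.sqrt (π / (2*u/h))) := by
          rw [lintegral_gaussian_shift hb]
      _ = ENNReal.ofReal (I1 u) := by
          rw [← ENNReal.ofReal_mul (Real.exp_pos _).le, hI1]
          congr 1
          have h1 : π / (2*u/h) = (π*h/2) * u⁻¹ := by
            field_simp
          rw [h1, Real.sqrt_mul (by positivity), Real.sqrt_inv]
          ring
  -- Step 3 : back to a Bochner integral
  have hint : IntegrableOn I1 (Ioi (0:ℝ)) := by
    have hrw : I1 = fun u => (Real.sqrt (π*h/2) * Real.exp (8/(3*h)))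
        * ((Real.sqrt u)⁻¹ * Real.exp (-(qq u)/h)) := by
      funext u
      rw [hI1]
      simp only []
      rw [exp_split hh.ne' u]
      ring
    rw [hrw, ← Set.Ioc_union_Ioi_eq_Ioi (zero_le_one (α := ℝ))]
    exact ((intOn1 hh).union (intOn2 hh)).const_mul _
  rw [h1, h2, ← ofReal_integral_eq_lintegral_ofReal hint
      (Eventually.of_forall fun u => by positivity)]
  rw [ENNReal.toReal_ofReal]
  exact setIntegral_nonneg measurableSet_Ioi fun u hu => by positivity

lemma tail_nonneg {h : ℝ} :
    0 ≤ ∫ u in Ioc (0:ℝ) 1, (Real.sqrt u)⁻¹ * Real.exp (-(qq u)/h) :=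
  setIntegral_nonneg measurableSet_Ioc fun u _ => by positivity

lemma tail_le {h : ℝ} (hh : 0 < h) :
    ∫ u in Ioc (0:ℝ) 1, (Real.sqrt u)⁻¹ * Real.exp (-(qq u)/h)
      ≤ Real.exp (-5/(6*h)) * 2 := by
  have hg2 : IntegrableOn (fun u : ℝ => Real.exp (-5/(6*h)) * u ^ (-(1:ℝ)/2)) (Ioc (0:ℝ) 1) :=
    int_rpow_half.const_mul _
  have h1 : ∫ u in Ioc (0:ℝ) 1, (Real.sqrt u)⁻¹ * Real.exp (-(qq u)/h)
      ≤ ∫ u in Ioc (0:ℝ) 1, Real.exp (-5/(6*h)) * u ^ (-(1:ℝ)/2) := by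
    refine setIntegral_mono_on (intOn1 hh) hg2 measurableSet_Ioc fun u hu => ?_
    have hu0 : 0 < u := hu.1
    rw [← sqrt_inv_eq_rpow hu0, mul_comm (Real.exp (-5/(6*h)))]
    apply mul_le_mul_of_nonneg_left ?_ (by positivity)
    rw [Real.exp_le_exp, show -5/(6*h) = -(5/6)/h by ring]
    gcongr
    · unfold qq
      nlinarith [mul_nonneg (mul_nonneg hu0.le hu0.le) hu0.le,
        mul_nonneg (by linarith [hu.2] : (0:ℝ) ≤ 1 - u)
          (by nlinarith [hu.2, hu0] : (0:ℝ) ≤ 11 - u - u^2)]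
  calc _ ≤ _ := h1
    _ = Real.exp (-5/(6*h)) * 2 := by rw [MeasureTheory.integral_const_mul, integral_rpow_half]

lemma lemM {h : ℝ} (hh : 0 < h) :
    ∫ u in Ioi (1:ℝ), (Real.sqrt u)⁻¹ * Real.exp (-(qq u)/h)
      = Real.sqrt h * ∫ t in Ioi (-1/Real.sqrt h),
          (Real.sqrt (2 + Real.sqrt h * t))⁻¹ * Real.exp (-t^2*(Real.sqrt h * t + 6)/6) := by
  set c := Real.sqrt h with hcdef
  have hc0 : 0 < c := Real.sqrt_pos.2 hh
  have hc2 : c^2 = h := Real.sq_sqrt hh.le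
  set W : ℝ → ℝ := (Ioi (1:ℝ)).indicator (fun u => (Real.sqrt u)⁻¹ * Real.exp (-(qq u)/h))
    with hW
  have e1 : ∫ u in Ioi (1:ℝ), (Real.sqrt u)⁻¹ * Real.exp (-(qq u)/h) = ∫ u, W u :=
    (MeasureTheory.integral_indicator measurableSet_Ioi).symm
  have e2 : ∫ u, W u = ∫ x, W (x + 2) := (integral_add_right_eq_self W 2).symm
  have e3 : ∫ t, W (c * t + 2) = |c⁻¹| • ∫ x, W (x + 2) :=
    Measure.integral_comp_mul_left (fun x => W (x + 2)) c
  have e4 : ∀ t : ℝ, W (c * t + 2)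
      = (Ioi (-1/c)).indicator
          (fun t => (Real.sqrt (2 + c * t))⁻¹ * Real.exp (-t^2*(c * t + 6)/6)) t := by
    intro t
    have hmem : c * t + 2 ∈ Ioi (1:ℝ) ↔ t ∈ Ioi (-1/c) := by
      simp only [mem_Ioi]
      rw [div_lt_iff₀ hc0]
      constructor <;> intro h' <;> nlinarith
    by_cases ht : t ∈ Ioi (-1/c)
    · rw [hW, indicator_of_mem (hmem.2 ht), indicator_of_mem ht]
      have harg : 2 + c * t = c * t + 2 := by ring
      rw [← harg]
      congr 1
      rw [Real.exp_eq_exp]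
      unfold qq
      field_simp
      rw [← hc2]
      ring
    · rw [hW, indicator_of_notMem (fun hmem' => ht (hmem.1 hmem')), indicator_of_notMem ht]
  have e5 : ∫ t, W (c * t + 2)
      = ∫ t in Ioi (-1/c), (Real.sqrt (2 + c * t))⁻¹ * Real.exp (-t^2*(c * t + 6)/6) := by
    rw [show (fun t => W (c * t + 2)) = _ from funext e4,
      MeasureTheory.integral_indicator measurableSet_Ioi]
  rw [e1, e2, ← e5, e3, abs_of_pos (inv_pos.2 hc0), smul_eq_mul, ← mul_assoc,
    mul_inv_cancel₀ hc0.ne', one_mul]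

lemma sqrt_tendsto : Tendsto (fun h : ℝ => Real.sqrt h) (𝓝[>] (0:ℝ)) (𝓝 0) := by
  have h1 := Real.continuous_sqrt.tendsto 0
  rw [Real.sqrt_zero] at h1
  exact h1.mono_left nhdsWithin_le_nhds

lemma lemK : Tendsto (fun h : ℝ => ∫ t in Ioi (-1/Real.sqrt h),
      (Real.sqrt (2 + Real.sqrt h * t))⁻¹ * Real.exp (-t^2*(Real.sqrt h * t + 6)/6))
    (𝓝[>] (0:ℝ)) (𝓝 (Real.sqrt (π/2))) := by
  set F : ℝ → ℝ → ℝ := fun h t => (Ioi (-1/Real.sqrt h)).indicator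
      (fun t => (Real.sqrt (2 + Real.sqrt h * t))⁻¹
        * Real.exp (-t^2*(Real.sqrt h * t + 6)/6)) t with hFdef
  have hrw : (fun h : ℝ => ∫ t in Ioi (-1/Real.sqrt h),
      (Real.sqrt (2 + Real.sqrt h * t))⁻¹ * Real.exp (-t^2*(Real.sqrt h * t + 6)/6))
      = fun h => ∫ t, F h t := by
    funext h
    exact (MeasureTheory.integral_indicator measurableSet_Ioi).symm
  rw [hrw]
  have hlimval : ∫ t : ℝ, (Real.sqrt 2)⁻¹ * Real.exp (-t^2) = Real.sqrt (π/2) := by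
    rw [MeasureTheory.integral_const_mul]
    have hg : ∫ t : ℝ, Real.exp (-t^2) = Real.sqrt π := by
      have := integral_gaussian 1
      simpa using this
    rw [hg, Real.sqrt_div pi_pos.le, inv_mul_eq_div]
  rw [← hlimval]
  refine tendsto_integral_filter_of_dominated_convergence
    (fun t => Real.exp (-(5/6:ℝ) * t^2)) ?_ ?_
    (integrable_exp_neg_mul_sq (by norm_num)) ?_
  · refine Eventually.of_forall fun h => ?_
    apply Measurable.aestronglyMeasurable
    exact Measurable.indicator (by fun_prop) measurableSet_Ioi
  · filter_upwards [self_mem_nhdsWithin] with h hh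
    have hc0 : 0 < Real.sqrt h := Real.sqrt_pos.2 hh
    refine Eventually.of_forall fun t => ?_
    by_cases ht : t ∈ Ioi (-1/Real.sqrt h)
    · rw [hFdef]
      simp only [indicator_of_mem ht]
      have hct : -1 < Real.sqrt h * t := by
        have := ht
        rw [mem_Ioi, div_lt_iff₀ hc0] at this
        nlinarith
      have h1 : 1 ≤ Real.sqrt (2 + Real.sqrt h * t) := Real.one_le_sqrt.mpr (by linarith)
      rw [Real.norm_eq_abs, abs_of_nonneg (by positivity)]
      have h2 : Real.exp (-t^2*(Real.sqrt h * t + 6)/6) ≤ Real.exp (-(5/6:ℝ) * t^2) := by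
        rw [Real.exp_le_exp]
        nlinarith [sq_nonneg t]
      calc (Real.sqrt (2 + Real.sqrt h * t))⁻¹ * Real.exp (-t^2*(Real.sqrt h * t + 6)/6)
          ≤ 1 * Real.exp (-t^2*(Real.sqrt h * t + 6)/6) :=
            mul_le_mul_of_nonneg_right (inv_le_one_of_one_le₀ h1) (Real.exp_pos _).le
        _ = Real.exp (-t^2*(Real.sqrt h * t + 6)/6) := one_mul _
        _ ≤ _ := h2
    · rw [hFdef]
      simp only [indicator_of_notMem ht]
      rw [norm_zero]
      positivity
  · refine Eventually.of_forall fun t => ?_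
    have hev : ∀ᶠ h in 𝓝[>] (0:ℝ),
        F h t = (fun s : ℝ => (Real.sqrt (2 + s * t))⁻¹ * Real.exp (-t^2*(s * t + 6)/6))
          (Real.sqrt h) := by
      have h2 : Tendsto (fun h : ℝ => Real.sqrt h * (-t)) (𝓝[>] (0:ℝ)) (𝓝 0) := by
        simpa using sqrt_tendsto.mul_const (-t)
      filter_upwards [h2.eventually_lt_const one_pos, self_mem_nhdsWithin] with h h3 hh
      have hc0 : 0 < Real.sqrt h := Real.sqrt_pos.2 hh
      rw [hFdef]
      apply indicator_of_mem
      rw [mem_Ioi, div_lt_iff₀ hc0]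
      nlinarith
    have hca : ContinuousAt
        (fun s : ℝ => (Real.sqrt (2 + s * t))⁻¹ * Real.exp (-t^2*(s * t + 6)/6)) 0 := by
      have hs : ContinuousAt (fun s : ℝ => Real.sqrt (2 + s * t)) 0 :=
        (Real.continuous_sqrt.comp (by fun_prop)).continuousAt
      have hne : Real.sqrt (2 + (0:ℝ) * t) ≠ 0 := by
        rw [zero_mul, add_zero]
        exact Real.sqrt_ne_zero'.mpr (by norm_num)
      exact (hs.inv₀ hne).mul (Real.continuous_exp.comp (by fun_prop)).continuousAt
    have hval : (Real.sqrt (2 + (0:ℝ) * t))⁻¹ * Real.exp (-t^2*((0:ℝ) * t + 6)/6)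
        = (Real.sqrt 2)⁻¹ * Real.exp (-t^2) := by
      norm_num
      ring
    have htd := hca.tendsto.comp sqrt_tendsto
    rw [hval] at htd
    exact htd.congr' (EventuallyEq.symm hev)

lemma part1 : Tendsto (fun h : ℝ => Φ h * (2 / (Real.pi * h)) * Real.exp (-8 / (3 * h)))
    (𝓝[>] (0:ℝ)) (𝓝 1) := by
  set T : ℝ → ℝ := fun h => ∫ u in Ioc (0:ℝ) 1, (Real.sqrt u)⁻¹ * Real.exp (-(qq u)/h) with hT
  set K : ℝ → ℝ := fun h => ∫ t in Ioi (-1/Real.sqrt h),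
      (Real.sqrt (2 + Real.sqrt h * t))⁻¹ * Real.exp (-t^2*(Real.sqrt h * t + 6)/6) with hK
  have key : ∀ h : ℝ, h ∈ Ioi (0:ℝ) → Φ h * (2 / (Real.pi * h)) * Real.exp (-8 / (3 * h))
      = Real.sqrt (2/(π*h)) * T h + Real.sqrt (2/π) * K h := by
    intro h hh
    rw [mem_Ioi] at hh
    have hΦ : Φ h = Real.sqrt (π*h/2) * Real.exp (8/(3*h)) *
        (T h + ∫ u in Ioi (1:ℝ), (Real.sqrt u)⁻¹ * Real.exp (-(qq u)/h)) := by
      rw [lemA hh]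
      have hpt : ∀ u : ℝ, Real.sqrt (π*h/2) * (Real.sqrt u)⁻¹ * Real.exp ((2/h) * (u - u^3/12))
          = (Real.sqrt (π*h/2) * Real.exp (8/(3*h)))
            * ((Real.sqrt u)⁻¹ * Real.exp (-(qq u)/h)) := by
        intro u
        rw [exp_split hh.ne' u]
        ring
      simp_rw [hpt]
      rw [MeasureTheory.integral_const_mul, ← Set.Ioc_union_Ioi_eq_Ioi (zero_le_one (α := ℝ)),
        setIntegral_union (Set.Ioc_disjoint_Ioi le_rfl) measurableSet_Ioi (intOn1 hh) (intOn2 hh)]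
    rw [hΦ, lemM hh]
    have hE : Real.exp (8/(3*h)) * Real.exp (-8 / (3*h)) = 1 := by
      rw [← Real.exp_add]
      ring_nf
      exact Real.exp_zero
    have hs1 : Real.sqrt (π*h/2) * (2/(π*h)) = Real.sqrt (2/(π*h)) := by
      have h2 : (2:ℝ)/(π*h) = (π*h/2) * (2/(π*h))^2 := by
        field_simp
      conv_rhs => rw [h2]
      rw [Real.sqrt_mul (by positivity), Real.sqrt_sq (by positivity)]
    have hs2 : Real.sqrt (2/(π*h)) * Real.sqrt h = Real.sqrt (2/π) := by
      rw [← Real.sqrt_mul (by positivity)]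
      congr 1
      field_simp
    calc Real.sqrt (π*h/2) * Real.exp (8/(3*h)) * (T h + Real.sqrt h * K h)
          * (2 / (π * h)) * Real.exp (-8 / (3 * h))
        = (Real.exp (8/(3*h)) * Real.exp (-8 / (3*h)))
            * ((Real.sqrt (π*h/2) * (2/(π*h))) * T h
              + ((Real.sqrt (π*h/2) * (2/(π*h))) * Real.sqrt h) * K h) := by ring
      _ = Real.sqrt (2/(π*h)) * T h + Real.sqrt (2/π) * K h := by
          rw [hE, hs1, hs2, one_mul]
  have hT0 : Tendsto (fun h : ℝ => Real.sqrt (2/(π*h)) * T h) (𝓝[>] (0:ℝ)) (𝓝 0) := by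
    apply squeeze_zero' (g := fun h : ℝ => Real.sqrt (2/(π*h)) * (Real.exp (-5/(6*h)) * 2))
    · exact Eventually.of_forall fun h => mul_nonneg (Real.sqrt_nonneg _) tail_nonneg
    · filter_upwards [self_mem_nhdsWithin] with h hh
      exact mul_le_mul_of_nonneg_left (tail_le hh) (Real.sqrt_nonneg _)
    · have hf : Tendsto (fun s : ℝ => (Real.sqrt (2/π) * 2)
          * (s ^ ((1:ℝ)/2) * Real.exp (-(5/6) * s))) atTop (𝓝 0) := by
        simpa using
          (tendsto_rpow_mul_exp_neg_mul_atTop_nhds_zero (1/2) (5/6) (by norm_num)).const_mul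
            (Real.sqrt (2/π) * 2)
      have hcomp := hf.comp tendsto_inv_nhdsGT_zero
      apply hcomp.congr'
      filter_upwards [self_mem_nhdsWithin] with h hh
      rw [mem_Ioi] at hh
      show (Real.sqrt (2/π) * 2) * ((h⁻¹) ^ ((1:ℝ)/2) * Real.exp (-(5/6) * h⁻¹))
          = Real.sqrt (2/(π*h)) * (Real.exp (-5/(6*h)) * 2)
      have e1 : Real.sqrt (2/(π*h)) = Real.sqrt (2/π) * (h⁻¹) ^ ((1:ℝ)/2) := by
        rw [← Real.sqrt_eq_rpow, ← Real.sqrt_mul (by positivity)]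
        congr 1
        field_simp
      have e2 : Real.exp (-5/(6*h)) = Real.exp (-(5/6) * h⁻¹) := by
        congr 1
        field_simp
      rw [e1, e2]
      ring
  have hK1 : Tendsto (fun h : ℝ => Real.sqrt (2/π) * K h) (𝓝[>] (0:ℝ))
      (𝓝 (Real.sqrt (2/π) * Real.sqrt (π/2))) := lemK.const_mul _
  have hone : Real.sqrt (2/π) * Real.sqrt (π/2) = 1 := by
    rw [← Real.sqrt_mul (by positivity), show (2/π) * (π/2) = 1 by field_simp, Real.sqrt_one]
  rw [hone] at hK1
  have := hT0.add hK1
  rw [zero_add] at this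
  apply this.congr'
  filter_upwards [self_mem_nhdsWithin] with h hh
  exact (key h hh).symm

lemma scale {lam : ℝ} (hlam : 0 < lam) :
    (∫ p in {p : ℝ × ℝ | p.2 < p.1},
        Real.exp ((2/3) * (p.2 ^ 3 - p.1 ^ 3) + 2 * lam * (p.1 - p.2)))
      = lam * Φ (lam ^ (-(3:ℝ)/2)) := by
  set c := Real.sqrt lam with hcdef
  have hc : 0 < c := Real.sqrt_pos.2 hlam
  have hc2 : c^2 = lam := Real.sq_sqrt hlam.le
  set h := lam ^ (-(3:ℝ)/2) with hhdef
  have h32 : lam ^ ((3:ℝ)/2) = c^3 := by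
    rw [show (3:ℝ)/2 = 1 + 1/2 by norm_num, Real.rpow_add hlam, Real.rpow_one,
      ← Real.sqrt_eq_rpow, ← hcdef, ← hc2]
    ring
  have hh' : h = (c^3)⁻¹ := by
    rw [hhdef, show (-(3:ℝ)/2) = -(3/2) by ring, Real.rpow_neg hlam.le, h32]
  have h2h : 2/h = 2 * c^3 := by
    rw [hh']
    field_simp
  set g : ℝ × ℝ → ℝ := fun p => Real.exp ((2/3) * (p.2 ^ 3 - p.1 ^ 3) + 2 * lam * (p.1 - p.2))
    with hg
  set f : ℝ × ℝ → ℝ := fun p => Real.exp ((2/h) * (φ p.1 - φ p.2)) with hf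
  have key : ∀ p : ℝ × ℝ, ({p : ℝ × ℝ | p.2 < p.1}).indicator g (c • p)
      = ({p : ℝ × ℝ | p.2 < p.1}).indicator f p := by
    intro p
    have hsm : c • p = (c * p.1, c * p.2) := rfl
    have hmem : (c • p) ∈ {p : ℝ × ℝ | p.2 < p.1} ↔ p ∈ {p : ℝ × ℝ | p.2 < p.1} := by
      rw [hsm]
      simp only [mem_setOf_eq]
      exact mul_lt_mul_iff_right₀ hc
    by_cases hp : p ∈ {p : ℝ × ℝ | p.2 < p.1}
    · rw [indicator_of_mem (hmem.2 hp), indicator_of_mem hp, hg, hf, hsm]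
      simp only []
      rw [Real.exp_eq_exp, h2h]
      unfold φ
      rw [← hc2]
      ring
    · rw [indicator_of_notMem (fun hm => hp (hmem.1 hm)), indicator_of_notMem hp]
  have hfin : Module.finrank ℝ (ℝ × ℝ) = 2 := by simp
  have hsmul := Measure.integral_comp_smul (volume : Measure (ℝ × ℝ))
      (({p : ℝ × ℝ | p.2 < p.1}).indicator g) c
  rw [hfin] at hsmul
  rw [show (fun p : ℝ × ℝ => ({p : ℝ × ℝ | p.2 < p.1}).indicator g (c • p))
      = ({p : ℝ × ℝ | p.2 < p.1}).indicator f from funext key] at hsmul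
  have habs : |((c:ℝ)^2)⁻¹| = lam⁻¹ := by
    rw [hc2, abs_of_pos (inv_pos.2 hlam)]
  rw [habs, smul_eq_mul] at hsmul
  rw [← MeasureTheory.integral_indicator measurableSet_S]
  have hPhi : Φ h = ∫ x : ℝ × ℝ, ({p : ℝ × ℝ | p.2 < p.1}).indicator f x := by
    unfold Φ
    exact (MeasureTheory.integral_indicator measurableSet_S).symm
  rw [hPhi, hsmul, ← mul_assoc, mul_inv_cancel₀ hlam.ne', one_mul]

lemma part2 : Tendsto (fun lam : ℝ =>
    (∫ p in {p : ℝ × ℝ | p.2 < p.1},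
        Real.exp ((2/3) * (p.2 ^ 3 - p.1 ^ 3) + 2 * lam * (p.1 - p.2))) /
      ((Real.pi / 2) * lam ^ (-(1:ℝ)/2) * Real.exp ((8/3) * lam ^ ((3:ℝ)/2))))
    atTop (𝓝 1) := by
  have htend : Tendsto (fun lam : ℝ => lam ^ (-(3:ℝ)/2)) atTop (𝓝[>] (0:ℝ)) := by
    rw [tendsto_nhdsWithin_iff]
    constructor
    · have := tendsto_rpow_neg_atTop (by norm_num : (0:ℝ) < 3/2)
      simpa [neg_div] using this
    · filter_upwards [eventually_gt_atTop (0:ℝ)] with lam hlam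
      exact Real.rpow_pos_of_pos hlam _
  have hcomp := part1.comp htend
  apply hcomp.congr'
  filter_upwards [eventually_gt_atTop (0:ℝ)] with lam hlam
  show Φ (lam ^ (-(3:ℝ)/2)) * (2 / (π * lam ^ (-(3:ℝ)/2)))
      * Real.exp (-8 / (3 * lam ^ (-(3:ℝ)/2))) = _
  rw [scale hlam]
  set s := lam ^ ((1:ℝ)/2) with hsdef
  have hs : 0 < s := Real.rpow_pos_of_pos hlam _
  have hhalf : lam ^ (-(1:ℝ)/2) = s⁻¹ := by
    rw [show (-(1:ℝ)/2) = -(1/2) by ring, Real.rpow_neg hlam.le, hsdef]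
  have h31 : lam ^ ((3:ℝ)/2) = lam * s := by
    rw [show (3:ℝ)/2 = 1 + 1/2 by norm_num, Real.rpow_add hlam, Real.rpow_one, hsdef]
  have hh'' : lam ^ (-(3:ℝ)/2) = (lam * s)⁻¹ := by
    rw [show (-(3:ℝ)/2) = -(3/2) by ring, Real.rpow_neg hlam.le,
      show lam ^ ((3:ℝ)/2) = lam * s from h31]
  rw [hh'', hhalf, h31]
  have hls : 0 < lam * s := by positivity
  have he1 : Real.exp (-8 / (3 * (lam * s)⁻¹)) = (Real.exp ((8/3) * (lam * s)))⁻¹ := by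
    rw [← Real.exp_neg]
    congr 1
    field_simp
  rw [he1]
  have hE : 0 < Real.exp ((8/3) * (lam * s)) := Real.exp_pos _
  rw [eq_div_iff (by positivity)]
  field_simp

/-- `Φ(h) ~ (πh/2) exp(8/(3h))` as `h → 0⁺`; consequently, as real `λ → +∞`, the squared
Hilbert–Schmidt norm `∬_{η<ξ} exp((2/3)(η³−ξ³) + 2λ(ξ−η)) dη dξ` of the resolvent of the
complex Airy operator on `L²(ℝ)` is asymptotically `(π/2) λ^{-1/2} exp((8/3) λ^{3/2})`. -/
theorem Phi_asymptotics :
    Filter.Tendsto (fun h : ℝ => Φ h * (2 / (Real.pi * h)) * Real.exp (-8 / (3 * h)))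
      (nhdsWithin 0 (Set.Ioi 0)) (nhds 1)
    ∧ Filter.Tendsto (fun lam : ℝ =>
        (∫ p in {p : ℝ × ℝ | p.2 < p.1},
            Real.exp ((2/3) * (p.2 ^ 3 - p.1 ^ 3) + 2 * lam * (p.1 - p.2))) /
          ((Real.pi / 2) * lam ^ (-(1:ℝ)/2) * Real.exp ((8/3) * lam ^ ((3:ℝ)/2))))
        Filter.atTop (nhds 1) :=
  ⟨part1, part2⟩

end
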